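/- Let a : ℝ → ℝ be continuous on [0,1] with 0 < a₀ ≤ a(x) ≤ a₁ for all x ∈ [0,1], let (u,p) be a classical solution of the damped wave system on [0,T], and let ε ∈ ℝ with |ε| ≤ a₀/(4 + 2a₁). Then for all t ∈ [0,T]: (1/2)·E¹(t) ≤ E¹_ε(t) ≤ (3/2)·E¹(t), where E¹(t) = (1/2) ∫₀¹ ((∂ₜu(t,x))² + (∂ₜp(t,x))²) dx and E¹_ε(t) = E¹(t) + ε·∫₀¹ ∂ₜu(t,x)·u(t,x) dx. -/

import Mathlib

open MeasureTheory Set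

/-- The L²(0,1) inner product `(f,g) = ∫₀¹ f g dx`. -/
noncomputable def L2ip (f g : ℝ → ℝ) : ℝ := ∫ x in (0:ℝ)..1, f x * g x

/-- The squared L²(0,1) norm `‖f‖² = ∫₀¹ f² dx`. -/
noncomputable def L2nsq (f : ℝ → ℝ) : ℝ := ∫ x in (0:ℝ)..1, (f x) ^ 2

/-- The L²(0,1) norm. -/
noncomputable def L2nrm (f : ℝ → ℝ) : ℝ := Real.sqrt (L2nsq f)

/-- A classical solution of the damped wave system on `[0,T] × [0,1]`:
`u, p` (time first, space second) with partial derivatives `ut, ux, pt, px`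
which are continuous on `[0,T] × [0,1]`, satisfying
`∂ₜ u + ∂ₓ p + a u = 0`, `∂ₜ p + ∂ₓ u = 0` and `p(t,0) = p(t,1) = 0`. -/
def IsClassicalSolution (T : ℝ) (a : ℝ → ℝ) (u p ut ux pt px : ℝ → ℝ → ℝ) : Prop :=
  (∀ t ∈ Icc (0:ℝ) T, ∀ x ∈ Icc (0:ℝ) 1,
      HasDerivAt (fun s => u s x) (ut t x) t ∧
      HasDerivAt (fun y => u t y) (ux t x) x ∧
      HasDerivAt (fun s => p s x) (pt t x) t ∧
      HasDerivAt (fun y => p t y) (px t x) x) ∧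
  ContinuousOn (Function.uncurry ut) (Icc (0:ℝ) T ×ˢ Icc (0:ℝ) 1) ∧
  ContinuousOn (Function.uncurry ux) (Icc (0:ℝ) T ×ˢ Icc (0:ℝ) 1) ∧
  ContinuousOn (Function.uncurry pt) (Icc (0:ℝ) T ×ˢ Icc (0:ℝ) 1) ∧
  ContinuousOn (Function.uncurry px) (Icc (0:ℝ) T ×ˢ Icc (0:ℝ) 1) ∧
  (∀ t ∈ Icc (0:ℝ) T, ∀ x ∈ Icc (0:ℝ) 1,
      ut t x + px t x + a x * u t x = 0 ∧ pt t x + ux t x = 0) ∧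
  (∀ t ∈ Icc (0:ℝ) T, p t 0 = 0 ∧ p t 1 = 0)



lemma myII {f : ℝ → ℝ} (hf : ContinuousOn f (Icc 0 1)) : IntervalIntegrable f volume 0 1 :=
  (by rwa [Set.uIcc_of_le zero_le_one] : ContinuousOn f (Set.uIcc (0:ℝ) 1)).intervalIntegrable

lemma myCS {f g : ℝ → ℝ} (hf : ContinuousOn f (Icc 0 1)) (hg : ContinuousOn g (Icc 0 1)) :
    (∫ x in (0:ℝ)..1, f x * g x)^2 ≤ (∫ x in (0:ℝ)..1, (f x)^2) * (∫ x in (0:ℝ)..1, (g x)^2) := by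
  set A := ∫ x in (0:ℝ)..1, (f x)^2 with hA
  set B := ∫ x in (0:ℝ)..1, (g x)^2 with hB
  set C := ∫ x in (0:ℝ)..1, f x * g x with hC
  have key : ∀ L : ℝ, 0 ≤ A * (L * L) + (2*C) * L + B := by
    intro L
    have h1 : (0:ℝ) ≤ ∫ x in (0:ℝ)..1, (L * f x + g x)^2 :=
      intervalIntegral.integral_nonneg zero_le_one (fun x _ => sq_nonneg _)
    have h2 : (∫ x in (0:ℝ)..1, (L * f x + g x)^2)
        = L^2 * A + 2*L*C + B := by
      have e : ∀ x : ℝ, (L * f x + g x)^2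
          = L^2 * (f x)^2 + (2*L) * (f x * g x) + (g x)^2 := fun x => by ring
      simp_rw [e]
      rw [intervalIntegral.integral_add (f := fun x => L^2 * (f x)^2 + (2*L) * (f x * g x))
            (g := fun x => (g x)^2) (((myII (hf.pow 2)).const_mul _).add
            ((myII (hf.mul hg)).const_mul _)) (myII (hg.pow 2)),
          intervalIntegral.integral_add (f := fun x => L^2 * (f x)^2)
            (g := fun x => (2*L) * (f x * g x)) ((myII (hf.pow 2)).const_mul _)
            ((myII (hf.mul hg)).const_mul _),
          intervalIntegral.integral_const_mul, intervalIntegral.integral_const_mul]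
      try ring
    nlinarith [h1, h2]
  have hd := discrim_le_zero key
  rw [discrim] at hd
  nlinarith [hd]

lemma myCSabs {f g : ℝ → ℝ} (hf : ContinuousOn f (Icc 0 1)) (hg : ContinuousOn g (Icc 0 1)) :
    |∫ x in (0:ℝ)..1, f x * g x| ≤
      Real.sqrt (∫ x in (0:ℝ)..1, (f x)^2) * Real.sqrt (∫ x in (0:ℝ)..1, (g x)^2) := by
  have hA : 0 ≤ ∫ x in (0:ℝ)..1, (f x)^2 :=
    intervalIntegral.integral_nonneg zero_le_one (fun x _ => sq_nonneg _)
  rw [← Real.sqrt_sq_eq_abs, ← Real.sqrt_mul hA]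
  exact Real.sqrt_le_sqrt (myCS hf hg)

lemma myAbsInt {f : ℝ → ℝ} (hf : ContinuousOn f (Icc 0 1)) :
    (∫ x in (0:ℝ)..1, |f x|) ≤ Real.sqrt (∫ x in (0:ℝ)..1, (f x)^2) := by
  have h := @myCSabs (fun x => |f x|) (fun _ => (1:ℝ)) hf.abs continuousOn_const
  simp only [mul_one, sq_abs] at h
  rw [intervalIntegral.integral_const] at h
  simp at h
  exact le_trans (le_abs_self _) h

lemma key_alg (a₀ a₁ U v q : ℝ) (h0 : 0 < a₀) (h01 : a₀ ≤ a₁) (hU : 0 ≤ U) (hv : 0 ≤ v) (hq : 0 ≤ q)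
    (h : a₀*U^2 ≤ U*v + q*v + a₁*q*U) :
    4*a₀*U*v ≤ (4+2*a₁)*(v^2+q^2) := by
  have ha1 : 0 < a₁ := lt_of_lt_of_le h0 h01
  have hD2 : (2*a₀*U - (v + a₁*q))^2 ≤ (v + a₁*q)^2 + 4*a₁*(q*v) := by
    nlinarith [mul_le_mul_of_nonneg_left h (by positivity : (0:ℝ) ≤ 4*a₀),
      mul_nonneg (mul_nonneg (sub_nonneg.2 h01) hq) hv]
  have hR0 : 0 ≤ (4+2*a₁)*(v^2+q^2) - 2*v*(v + a₁*q) := by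
    nlinarith [sq_nonneg (v-q), mul_nonneg (mul_nonneg ha1.le hq) hv]
  rcases le_or_gt (2*a₀*U) (v + a₁*q) with hc | hc
  · nlinarith [mul_nonneg hv (sub_nonneg.2 hc)]
  · have hQ : 4*v^2*((v + a₁*q)^2 + 4*a₁*(q*v)) ≤ ((4+2*a₁)*(v^2+q^2) - 2*v*(v + a₁*q))^2 := by
      nlinarith [mul_nonneg (by positivity : (0:ℝ) ≤ v^2+q^2) (sq_nonneg (a₁*(v-q)-2*q)),
        mul_nonneg (mul_nonneg ha1.le (sq_nonneg v)) (sq_nonneg (v-q))]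
    have h2vD : 2*v*(2*a₀*U - (v + a₁*q)) ≤ (4+2*a₁)*(v^2+q^2) - 2*v*(v + a₁*q) := by
      nlinarith [mul_le_mul_of_nonneg_left hD2 (by positivity : (0:ℝ) ≤ 4*v^2),
        mul_nonneg (mul_nonneg hv hv) (sq_nonneg (2*a₀*U - (v + a₁*q))),
        mul_nonneg hv (le_of_lt (sub_pos.2 hc))]
    nlinarith []

theorem stmt5' (T : ℝ) (hT : 0 < T) (a : ℝ → ℝ) (a₀ a₁ : ℝ)
    (ha : ContinuousOn a (Icc (0:ℝ) 1)) (ha₀ : 0 < a₀)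
    (hbd : ∀ x ∈ Icc (0:ℝ) 1, a₀ ≤ a x ∧ a x ≤ a₁)
    (u p ut ux pt px : ℝ → ℝ → ℝ)
    (hder : ∀ t ∈ Icc (0:ℝ) T, ∀ x ∈ Icc (0:ℝ) 1,
      HasDerivAt (fun s => u s x) (ut t x) t ∧
      HasDerivAt (fun y => u t y) (ux t x) x ∧
      HasDerivAt (fun s => p s x) (pt t x) t ∧
      HasDerivAt (fun y => p t y) (px t x) x)
    (hcut : ContinuousOn (Function.uncurry ut) (Icc (0:ℝ) T ×ˢ Icc (0:ℝ) 1))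
    (hcux : ContinuousOn (Function.uncurry ux) (Icc (0:ℝ) T ×ˢ Icc (0:ℝ) 1))
    (hcpt : ContinuousOn (Function.uncurry pt) (Icc (0:ℝ) T ×ˢ Icc (0:ℝ) 1))
    (hcpx : ContinuousOn (Function.uncurry px) (Icc (0:ℝ) T ×ˢ Icc (0:ℝ) 1))
    (hpde : ∀ t ∈ Icc (0:ℝ) T, ∀ x ∈ Icc (0:ℝ) 1,
      ut t x + px t x + a x * u t x = 0 ∧ pt t x + ux t x = 0)
    (hbc : ∀ t ∈ Icc (0:ℝ) T, p t 0 = 0 ∧ p t 1 = 0)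
    (ε : ℝ) (hε : |ε| ≤ a₀ / (4 + 2 * a₁)) (t : ℝ) (ht : t ∈ Icc (0:ℝ) T) :
      (1/2) * ((1/2) * ∫ x in (0:ℝ)..1, ((ut t x) ^ 2 + (pt t x) ^ 2))
        ≤ (1/2) * (∫ x in (0:ℝ)..1, ((ut t x) ^ 2 + (pt t x) ^ 2))
            + ε * ∫ x in (0:ℝ)..1, ut t x * u t x ∧
      (1/2) * (∫ x in (0:ℝ)..1, ((ut t x) ^ 2 + (pt t x) ^ 2))
          + ε * ∫ x in (0:ℝ)..1, ut t x * u t x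
        ≤ (3/2) * ((1/2) * ∫ x in (0:ℝ)..1, ((ut t x) ^ 2 + (pt t x) ^ 2)) := by
  have h01 : (0:ℝ) ≤ 1 := zero_le_one
  have hmem0 : (0:ℝ) ∈ Icc (0:ℝ) 1 := ⟨le_refl 0, zero_le_one⟩
  have ha01 : a₀ ≤ a₁ := le_trans (hbd 0 hmem0).1 (hbd 0 hmem0).2
  have ha1 : 0 < a₁ := lt_of_lt_of_le ha₀ ha01
  have h4pos : (0:ℝ) < 4 + 2*a₁ := by linarith
  have hεb : |ε| * (4 + 2*a₁) ≤ a₀ := by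
    rw [← le_div_iff₀ h4pos]; exact hε
  -- continuity of slices
  have hmap : ContinuousOn (fun x : ℝ => (t, x)) (Icc (0:ℝ) 1) :=
    (continuous_const.prodMk continuous_id).continuousOn
  have hsl : ∀ {F : ℝ → ℝ → ℝ}, ContinuousOn (Function.uncurry F) (Icc (0:ℝ) T ×ˢ Icc (0:ℝ) 1) →
      ContinuousOn (fun x => F t x) (Icc (0:ℝ) 1) := by
    intro F hF
    have := hF.comp hmap (fun x hx => Set.mk_mem_prod ht hx)
    exact this
  have cut : ContinuousOn (fun x => ut t x) (Icc (0:ℝ) 1) := hsl hcut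
  have cux : ContinuousOn (fun x => ux t x) (Icc (0:ℝ) 1) := hsl hcux
  have cpt : ContinuousOn (fun x => pt t x) (Icc (0:ℝ) 1) := hsl hcpt
  have cpx : ContinuousOn (fun x => px t x) (Icc (0:ℝ) 1) := hsl hcpx
  have cu : ContinuousOn (fun x => u t x) (Icc (0:ℝ) 1) :=
    fun x hx => ((hder t ht x hx).2.1.continuousAt).continuousWithinAt
  have cp : ContinuousOn (fun x => p t x) (Icc (0:ℝ) 1) :=
    fun x hx => ((hder t ht x hx).2.2.2.continuousAt).continuousWithinAt
  -- norms
  set U := Real.sqrt (∫ x in (0:ℝ)..1, (u t x)^2) with hUdef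
  set v := Real.sqrt (∫ x in (0:ℝ)..1, (ut t x)^2) with hvdef
  set q := Real.sqrt (∫ x in (0:ℝ)..1, (pt t x)^2) with hqdef
  have hUnn : 0 ≤ U := Real.sqrt_nonneg _
  have hvnn : 0 ≤ v := Real.sqrt_nonneg _
  have hqnn : 0 ≤ q := Real.sqrt_nonneg _
  have hU2 : U^2 = ∫ x in (0:ℝ)..1, (u t x)^2 :=
    Real.sq_sqrt (intervalIntegral.integral_nonneg h01 (fun x _ => sq_nonneg _))
  have hv2 : v^2 = ∫ x in (0:ℝ)..1, (ut t x)^2 :=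
    Real.sq_sqrt (intervalIntegral.integral_nonneg h01 (fun x _ => sq_nonneg _))
  have hq2 : q^2 = ∫ x in (0:ℝ)..1, (pt t x)^2 :=
    Real.sq_sqrt (intervalIntegral.integral_nonneg h01 (fun x _ => sq_nonneg _))
  -- pointwise bound on |p t x|
  have hpb : ∀ x ∈ Icc (0:ℝ) 1, |p t x| ≤ v + a₁ * U := by
    intro x hx
    have hsub : Icc (0:ℝ) x ⊆ Icc (0:ℝ) 1 := Icc_subset_Icc le_rfl hx.2
    have hpxint : IntervalIntegrable (fun y => px t y) volume 0 x := by
      apply ContinuousOn.intervalIntegrable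
      rw [Set.uIcc_of_le hx.1]; exact cpx.mono hsub
    have hftc : (∫ y in (0:ℝ)..x, px t y) = p t x - p t 0 :=
      intervalIntegral.integral_eq_sub_of_hasDerivAt (fun y hy => by
        rw [Set.uIcc_of_le hx.1] at hy
        exact (hder t ht y (hsub hy)).2.2.2) hpxint
    have hp0 : p t 0 = 0 := (hbc t ht).1
    have h1 : |p t x| = |∫ y in (0:ℝ)..x, px t y| := by rw [hftc, hp0, sub_zero]
    have h2 : |∫ y in (0:ℝ)..x, px t y| ≤ ∫ y in (0:ℝ)..x, |px t y| :=
      intervalIntegral.abs_integral_le_integral_abs hx.1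
    have h3 : (∫ y in (0:ℝ)..x, |px t y|) ≤ ∫ y in (0:ℝ)..1, |px t y| := by
      apply intervalIntegral.integral_mono_interval le_rfl hx.1 hx.2
      · exact Filter.Eventually.of_forall (fun y => abs_nonneg _)
      · exact myII cpx.abs
    have h4 : (∫ y in (0:ℝ)..1, |px t y|) ≤ ∫ y in (0:ℝ)..1, (|ut t y| + a₁ * |u t y|) := by
      apply intervalIntegral.integral_mono_on h01 (myII cpx.abs)
        ((myII cut.abs).add ((myII cu.abs).const_mul _))
      intro y hy
      have hpe := (hpde t ht y hy).1
      have hay := hbd y hy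
      have hexpr : px t y = (-(ut t y)) + (-(a y * u t y)) := by linarith
      rw [hexpr]
      refine le_trans (abs_add_le _ _) ?_
      rw [abs_neg, abs_neg, abs_mul, abs_of_pos (lt_of_lt_of_le ha₀ hay.1)]
      have : a y * |u t y| ≤ a₁ * |u t y| := mul_le_mul_of_nonneg_right hay.2 (abs_nonneg _)
      linarith
    have h5 : (∫ y in (0:ℝ)..1, (|ut t y| + a₁ * |u t y|))
        = (∫ y in (0:ℝ)..1, |ut t y|) + a₁ * ∫ y in (0:ℝ)..1, |u t y| := by
      rw [intervalIntegral.integral_add (myII cut.abs) ((myII cu.abs).const_mul _),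
        intervalIntegral.integral_const_mul]
    have h6 : (∫ y in (0:ℝ)..1, |ut t y|) ≤ v := myAbsInt cut
    have h7 : (∫ y in (0:ℝ)..1, |u t y|) ≤ U := myAbsInt cu
    have h8 : a₁ * (∫ y in (0:ℝ)..1, |u t y|) ≤ a₁ * U :=
      mul_le_mul_of_nonneg_left h7 ha1.le
    rw [h1]; linarith
  -- integration by parts
  have hIBP : (∫ x in (0:ℝ)..1, u t x * px t x) = ∫ x in (0:ℝ)..1, pt t x * p t x := by
    have h₁ := intervalIntegral.integral_mul_deriv_eq_deriv_mul
      (u := fun x => u t x) (u' := fun x => ux t x) (v := fun x => p t x) (v' := fun x => px t x)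
      (fun x hx => (hder t ht x (by rwa [Set.uIcc_of_le h01] at hx)).2.1)
      (fun x hx => (hder t ht x (by rwa [Set.uIcc_of_le h01] at hx)).2.2.2)
      (myII cux) (myII cpx)
    simp only [show p t 1 = 0 from (hbc t ht).2, show p t 0 = 0 from (hbc t ht).1,
      mul_zero, sub_zero, zero_sub] at h₁
    rw [h₁]
    rw [← intervalIntegral.integral_neg]
    apply intervalIntegral.integral_congr
    intro x hx
    rw [Set.uIcc_of_le h01] at hx
    have hpe := (hpde t ht x hx).2
    show -(ux t x * p t x) = pt t x * p t x
    have : ux t x = -(pt t x) := by linarith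
    rw [this]; ring
  -- monotonicity
  have hmono : a₀ * (∫ x in (0:ℝ)..1, (u t x)^2) ≤ ∫ x in (0:ℝ)..1, a x * (u t x)^2 := by
    rw [← intervalIntegral.integral_const_mul]
    apply intervalIntegral.integral_mono_on h01 ((myII (cu.pow 2)).const_mul _)
      (myII (ha.mul (cu.pow 2)))
    intro x hx
    exact mul_le_mul_of_nonneg_right (hbd x hx).1 (sq_nonneg _)
  have hid : (∫ x in (0:ℝ)..1, a x * (u t x)^2)
      = -(∫ x in (0:ℝ)..1, u t x * ut t x) - ∫ x in (0:ℝ)..1, u t x * px t x := by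
    have e : (∫ x in (0:ℝ)..1, a x * (u t x)^2)
        = ∫ x in (0:ℝ)..1, ((-(u t x * ut t x)) + (-(u t x * px t x))) := by
      apply intervalIntegral.integral_congr
      intro x hx
      rw [Set.uIcc_of_le h01] at hx
      have hpe := (hpde t ht x hx).1
      have h' : a x * u t x = -(ut t x) - px t x := by linarith
      show a x * (u t x)^2 = -(u t x * ut t x) + -(u t x * px t x)
      rw [show a x * (u t x)^2 = (a x * u t x) * u t x by ring, h']
      ring
    rw [e, intervalIntegral.integral_add (f := fun x => -(u t x * ut t x))
      (g := fun x => -(u t x * px t x)) (myII (cu.mul cut).neg) (myII (cu.mul cpx).neg),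
      intervalIntegral.integral_neg, intervalIntegral.integral_neg]
    ring
  have habs1 : |∫ x in (0:ℝ)..1, u t x * ut t x| ≤ U * v := myCSabs cu cut
  have habs2 : |∫ x in (0:ℝ)..1, pt t x * p t x| ≤ q * (v + a₁ * U) := by
    have s1 : |∫ x in (0:ℝ)..1, pt t x * p t x| ≤ ∫ x in (0:ℝ)..1, |pt t x * p t x| :=
      intervalIntegral.abs_integral_le_integral_abs h01
    have s2 : (∫ x in (0:ℝ)..1, |pt t x * p t x|)
        ≤ ∫ x in (0:ℝ)..1, |pt t x| * (v + a₁ * U) := by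
      apply intervalIntegral.integral_mono_on h01 (myII (cpt.mul cp).abs)
        ((myII cpt.abs).mul_const _)
      intro x hx
      show |pt t x * p t x| ≤ _
      rw [abs_mul]
      exact mul_le_mul_of_nonneg_left (hpb x hx) (abs_nonneg _)
    have s3 : (∫ x in (0:ℝ)..1, |pt t x| * (v + a₁ * U))
        = (∫ x in (0:ℝ)..1, |pt t x|) * (v + a₁ * U) := intervalIntegral.integral_mul_const _ _
    have s4 : (∫ x in (0:ℝ)..1, |pt t x|) * (v + a₁ * U) ≤ q * (v + a₁ * U) := by
      apply mul_le_mul_of_nonneg_right (myAbsInt cpt)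
      positivity
    calc |∫ x in (0:ℝ)..1, pt t x * p t x| ≤ _ := s1
      _ ≤ _ := s2
      _ = _ := s3
      _ ≤ _ := s4
  have hkey : a₀ * U^2 ≤ U*v + q*v + a₁*q*U := by
    rw [hU2]
    have c1 : a₀ * (∫ x in (0:ℝ)..1, (u t x)^2)
        ≤ -(∫ x in (0:ℝ)..1, u t x * ut t x) - ∫ x in (0:ℝ)..1, pt t x * p t x := by
      rw [← hIBP, ← hid]; exact hmono
    have c2 : -(∫ x in (0:ℝ)..1, u t x * ut t x) ≤ U * v :=
      le_trans (neg_le_abs _) habs1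
    have c3 : -(∫ x in (0:ℝ)..1, pt t x * p t x) ≤ q * (v + a₁ * U) :=
      le_trans (neg_le_abs _) habs2
    nlinarith [c1, c2, c3]
  have halg := key_alg a₀ a₁ U v q ha₀ ha01 hUnn hvnn hqnn hkey
  have hJ : |∫ x in (0:ℝ)..1, ut t x * u t x| ≤ v * U := myCSabs cut cu
  have hquarter : |ε * ∫ x in (0:ℝ)..1, ut t x * u t x| ≤ (1/4) * (v^2 + q^2) := by
    rw [abs_mul]
    have m1 : |ε| * |∫ x in (0:ℝ)..1, ut t x * u t x| ≤ |ε| * (v * U) :=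
      mul_le_mul_of_nonneg_left hJ (abs_nonneg _)
    have m2 : (|ε| * (4 + 2*a₁)) * (v * U) ≤ a₀ * (v * U) :=
      mul_le_mul_of_nonneg_right hεb (by positivity)
    nlinarith [m1, m2, halg, h4pos, mul_nonneg (abs_nonneg ε) (mul_nonneg hvnn hUnn)]
  have hIsplit : (∫ x in (0:ℝ)..1, ((ut t x)^2 + (pt t x)^2)) = v^2 + q^2 := by
    rw [intervalIntegral.integral_add (f := fun x => (ut t x)^2) (g := fun x => (pt t x)^2)
      (myII (cut.pow 2)) (myII (cpt.pow 2)), hv2, hq2]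
  rw [hIsplit]
  obtain ⟨hl, hr⟩ := abs_le.mp hquarter
  constructor <;> linarith

/-- Equivalence of the first-order energy `E¹` and the modified energy
`E¹_ε = E¹ + ε (∂ₜu, u)` for `|ε| ≤ a₀/(4 + 2a₁)`. -/
theorem stmt5 (T : ℝ) (hT : 0 < T) (a : ℝ → ℝ) (a₀ a₁ : ℝ)
    (ha : ContinuousOn a (Icc (0:ℝ) 1)) (ha₀ : 0 < a₀)
    (hbd : ∀ x ∈ Icc (0:ℝ) 1, a₀ ≤ a x ∧ a x ≤ a₁)
    (u p ut ux pt px : ℝ → ℝ → ℝ)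
    (hsol : IsClassicalSolution T a u p ut ux pt px)
    (ε : ℝ) (hε : |ε| ≤ a₀ / (4 + 2 * a₁)) :
    ∀ t ∈ Icc (0:ℝ) T,
      (1/2) * ((1/2) * ∫ x in (0:ℝ)..1, ((ut t x) ^ 2 + (pt t x) ^ 2))
        ≤ (1/2) * (∫ x in (0:ℝ)..1, ((ut t x) ^ 2 + (pt t x) ^ 2))
            + ε * ∫ x in (0:ℝ)..1, ut t x * u t x ∧
      (1/2) * (∫ x in (0:ℝ)..1, ((ut t x) ^ 2 + (pt t x) ^ 2))
          + ε * ∫ x in (0:ℝ)..1, ut t x * u t x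
        ≤ (3/2) * ((1/2) * ∫ x in (0:ℝ)..1, ((ut t x) ^ 2 + (pt t x) ^ 2)) := by
  intro t ht
  obtain ⟨hder, hcut, hcux, hcpt, hcpx, hpde, hbc⟩ := hsol
  exact stmt5' T hT a a₀ a₁ ha ha₀ hbd u p ut ux pt px hder hcut hcux hcpt hcpx hpde hbc ε hε t ht
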